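/- arXiv:2409.13397 — 3 statements merged into one kernel-verified Lean document; each statement's English description precedes it below -/
import Mathlib

section
/- Define B_0 = A^{-1}(e^A - I) and recursively B_k = A^{-1}(k B_{k-1} + (-1/2)^k (e^A - (-1)^k I)) for k ≥ 1, where A is an invertible square matrix. Then B_k = e^A ∫_0^1 e^{-Aτ}(τ - 1/2)^k dτ for all k ≥ 0. -/
open NormedSpace intervalIntegral MeasureTheory
attribute [local instance] Matrix.linftyOpNormedRing Matrix.linftyOpNormedAlgebra

variable {n : ℕ}

private lemma g_deriv (A : Matrix (Fin n) (Fin n) ℂ) (τ : ℝ) :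
    HasDerivAt (fun t : ℝ => exp ((-(t:ℂ)) • A)) (-(A * exp ((-(τ:ℂ)) • A))) τ := by
  have h : ∀ t : ℝ, (-(t:ℂ)) • A = t • (-A) := by
    intro t
    rw [neg_smul, Complex.coe_smul, ← smul_neg]
  simp_rw [h]
  have := hasDerivAt_exp_smul_const' (𝕂 := ℝ) (-A) τ
  simp [neg_mul] at this ⊢
  exact this

private lemma g_cont (A : Matrix (Fin n) (Fin n) ℂ) :
    Continuous (fun t : ℝ => exp ((-(t:ℂ)) • A)) :=
  exp_continuous.comp (by fun_prop)

private lemma key (A : Matrix (Fin n) (Fin n) ℂ) (k : ℕ) :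
    A * (∫ τ in (0:ℝ)..1, (τ - 1/2) ^ k • exp ((-(τ:ℂ)) • A)) =
      (k:ℝ) • (∫ τ in (0:ℝ)..1, (τ - 1/2) ^ (k-1) • exp ((-(τ:ℂ)) • A))
      + ((-1/2:ℝ)^k) • (1 : Matrix (Fin n) (Fin n) ℂ)
      - ((1/2:ℝ)^k) • exp (-A) := by
  set g : ℝ → Matrix (Fin n) (Fin n) ℂ := fun t => exp ((-(t:ℂ)) • A) with hg
  have hgc : Continuous g := g_cont A
  have hpc : ∀ m : ℕ, Continuous (fun τ : ℝ => (τ - 1/2) ^ m) := by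
    intro m; fun_prop
  have hder : ∀ τ : ℝ, HasDerivAt (fun t : ℝ => (t - 1/2) ^ k • g t)
      (((k:ℝ) * (τ - 1/2) ^ (k-1)) • g τ + (τ - 1/2) ^ k • (-(A * g τ))) τ := by
    intro τ
    have h1 : HasDerivAt (fun t : ℝ => (t - 1/2) ^ k) ((k:ℝ) * (τ - 1/2) ^ (k-1) * 1) τ :=
      ((hasDerivAt_id τ).sub_const _).pow k
    have := h1.smul (g_deriv A τ)
    simp [hg, mul_one, add_comm, Pi.smul_def'] at this ⊢
    exact this
  have hcont : Continuous (fun τ : ℝ => ((k:ℝ) * (τ - 1/2) ^ (k-1)) • g τ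
      + (τ - 1/2) ^ k • (-(A * g τ))) :=
    ((continuous_const.mul (hpc (k-1))).smul hgc).add
      ((hpc k).smul (continuous_const.mul hgc).neg)
  have hftc := intervalIntegral.integral_eq_sub_of_hasDerivAt
    (fun τ _ => hder τ) (hcont.intervalIntegrable 0 1)
  have hi1 := (((continuous_const : Continuous fun _ : ℝ => (k:ℝ)).mul (hpc (k-1))).smul hgc).intervalIntegrable (u := fun τ : ℝ => ((k:ℝ) * (τ - 1/2) ^ (k-1)) • g τ) (μ := volume) 0 1
  have hi2 := ((hpc k).smul ((continuous_const : Continuous fun _ : ℝ => A).mul hgc).neg).intervalIntegrable (u := fun τ : ℝ => (τ - 1/2) ^ k • (-(A * g τ))) (μ := volume) 0 1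
  rw [intervalIntegral.integral_add hi1 hi2] at hftc
  have e1 : (∫ τ in (0:ℝ)..1, ((k:ℝ) * (τ - 1/2) ^ (k-1)) • g τ)
      = (k:ℝ) • (∫ τ in (0:ℝ)..1, (τ - 1/2) ^ (k-1) • g τ) := by
    simp_rw [mul_smul]
    exact intervalIntegral.integral_smul _ _
  have e2 : (∫ τ in (0:ℝ)..1, (τ - 1/2) ^ k • (-(A * g τ)))
      = -(A * (∫ τ in (0:ℝ)..1, (τ - 1/2) ^ k • g τ)) := by
    have hL := ContinuousLinearMap.intervalIntegral_comp_comm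
      (ContinuousLinearMap.mul ℂ (Matrix (Fin n) (Fin n) ℂ) A)
      (((hpc k).smul hgc).intervalIntegrable (u := fun τ : ℝ => (τ - 1/2) ^ k • g τ) (μ := volume) 0 1)
    simp only [ContinuousLinearMap.mul_apply'] at hL
    simp_rw [smul_neg, ← mul_smul_comm]
    rw [intervalIntegral.integral_neg, hL]
  rw [e1, e2] at hftc
  have hF1 : ((1:ℝ) - 1/2) ^ k • g 1 = ((1/2:ℝ)^k) • exp (-A) := by
    norm_num [hg]
  have hF0 : ((0:ℝ) - 1/2) ^ k • g 0 = ((-1/2:ℝ)^k) • (1 : Matrix (Fin n) (Fin n) ℂ) := by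
    norm_num [hg, exp_zero]
  rw [hF1, hF0] at hftc
  simp only [hg] at hftc
  have h3 : A * (∫ τ in (0:ℝ)..1, (τ - 1/2) ^ k • exp ((-(τ:ℂ)) • A))
      = (k:ℝ) • (∫ τ in (0:ℝ)..1, (τ - 1/2) ^ (k-1) • exp ((-(τ:ℂ)) • A))
        - ((1/2:ℝ)^k • exp (-A) - (-1/2:ℝ)^k • (1 : Matrix (Fin n) (Fin n) ℂ)) := by
    rw [← hftc]; abel
  rw [h3]; abel

theorem stmt_1 (n : ℕ) (A : Matrix (Fin n) (Fin n) ℂ) (hA : IsUnit A)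
    (B : ℕ → Matrix (Fin n) (Fin n) ℂ)
    (hB0 : B 0 = A⁻¹ * (exp A - 1))
    (hBk : ∀ k : ℕ, 1 ≤ k →
      B k = A⁻¹ * ((k : ℂ) • B (k - 1) +
        ((-1/2 : ℂ)) ^ k • (exp A - ((-1 : ℂ)) ^ k • (1 : Matrix (Fin n) (Fin n) ℂ)))) :
    ∀ k : ℕ, B k = exp A * ∫ τ in (0:ℝ)..1, (τ - 1/2) ^ k • exp ((-(τ:ℂ)) • A) := by
  have hAinv : A⁻¹ * A = 1 := Matrix.nonsing_inv_mul A ((Matrix.isUnit_iff_isUnit_det A).mp hA)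
  have hcomm : A * exp A = exp A * A := ((Commute.refl A).exp_right).eq
  have hexp : exp A * exp (-A) = 1 := by
    rw [← Matrix.exp_add_of_commute _ _ ((Commute.refl A).neg_right)]
    simp
  intro k
  induction k with
  | zero =>
    have hk := key A 0
    simp only [pow_zero, Nat.cast_zero, zero_smul, zero_add, one_smul] at hk
    rw [hB0]
    have h2 : A * (exp A * ∫ τ in (0:ℝ)..1, exp ((-(τ:ℂ)) • A))
        = exp A - 1 := by
      rw [← mul_assoc, hcomm, mul_assoc, hk, mul_sub, mul_one, hexp]
    simp only [pow_zero, one_smul]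
    rw [← h2, ← mul_assoc, hAinv, one_mul]
  | succ m ih =>
    have hk := key A (m+1)
    simp only [Nat.add_sub_cancel, Nat.cast_add, Nat.cast_one] at hk
    have hc1 : ∀ (M : Matrix (Fin n) (Fin n) ℂ), ((m:ℝ)+1) • M = ((m+1:ℕ):ℂ) • M := by
      intro M
      rw [← Complex.coe_smul]
      norm_num
    have hc2 : ∀ (M : Matrix (Fin n) (Fin n) ℂ),
        ((-1/2:ℝ)^(m+1)) • M = ((-1/2:ℂ)^(m+1)) • M := by
      intro M
      rw [← Complex.coe_smul]
      norm_num
    have hc3 : ∀ (M : Matrix (Fin n) (Fin n) ℂ),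
        ((1/2:ℝ)^(m+1)) • M = ((1/2:ℂ)^(m+1)) • M := by
      intro M
      rw [← Complex.coe_smul]
      norm_num
    rw [hBk (m+1) (by omega)]
    simp only [Nat.add_sub_cancel]
    rw [ih]
    have hmain : A * (exp A * ∫ τ in (0:ℝ)..1, (τ - 1/2) ^ (m+1) • exp ((-(τ:ℂ)) • A)) =
        ((m+1:ℕ):ℂ) • (exp A * ∫ τ in (0:ℝ)..1, (τ - 1/2) ^ m • exp ((-(τ:ℂ)) • A)) +
        (-1/2:ℂ)^(m+1) • (exp A - (-1:ℂ)^(m+1) • (1 : Matrix (Fin n) (Fin n) ℂ)) := by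
      rw [← mul_assoc, hcomm, mul_assoc, hk]
      rw [mul_sub, mul_add, mul_smul_comm, mul_smul_comm, mul_smul_comm, mul_one, hexp]
      rw [hc1, hc2, hc3]
      rw [smul_sub, smul_smul]
      rw [add_sub_assoc]
      congr 2
      rw [← mul_pow]
      norm_num
    rw [← hmain, ← mul_assoc, hAinv, one_mul]
end

section
/- For k ≥ 1 and any square matrix A, the matrix B_k = e^A ∫_0^1 e^{-Aτ}(τ - 1/2)^k dτ satisfies A·B_k = k B_{k-1} + (-1/2)^k (e^A - (-1)^k I). -/
open NormedSpace
attribute [local instance] Matrix.linftyOpNormedRing Matrix.linftyOpNormedAlgebra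

theorem stmt_3 (n : ℕ) (A : Matrix (Fin n) (Fin n) ℂ) (k : ℕ) (hk : 1 ≤ k) :
    A * (exp A * ∫ τ in (0:ℝ)..1, (τ - 1/2) ^ k • exp ((-(τ:ℂ)) • A)) =
      (k : ℂ) • (exp A * ∫ τ in (0:ℝ)..1, (τ - 1/2) ^ (k - 1) • exp ((-(τ:ℂ)) • A)) +
      ((-1/2 : ℂ)) ^ k • (exp A - ((-1 : ℂ)) ^ k • (1 : Matrix (Fin n) (Fin n) ℂ)) := by
  set g : ℝ → Matrix (Fin n) (Fin n) ℂ := fun τ => exp ((-(τ:ℂ)) • A) with hg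
  -- derivative of g
  have hgd : ∀ τ : ℝ, HasDerivAt g (g τ * (-A)) τ := by
    intro τ
    have h := ((hasDerivAt_exp_smul_const (𝕂 := ℂ) (-A) (τ:ℂ)).hasFDerivAt.restrictScalars
      ℝ).comp_hasDerivAt τ Complex.ofRealCLM.hasDerivAt
    have e1 : ∀ t : ℂ, t • (-A) = (-t) • A := fun t => by rw [smul_neg, neg_smul]
    simp [hg, e1] at h ⊢; exact h
  -- continuity of g
  have hgc : Continuous g := by
    apply exp_continuous.comp
    continuity
  -- the product function and its derivative
  set F : ℝ → Matrix (Fin n) (Fin n) ℂ := fun τ => (τ - 1/2) ^ k • g τ with hF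
  set F' : ℝ → Matrix (Fin n) (Fin n) ℂ := fun τ =>
    ((k:ℝ) * (τ - 1/2) ^ (k - 1)) • g τ + (τ - 1/2) ^ k • (g τ * (-A)) with hF'
  have hFd : ∀ τ : ℝ, HasDerivAt F (F' τ) τ := by
    intro τ
    have hc : HasDerivAt (fun t : ℝ => (t - 1/2) ^ k)
        ((k:ℝ) * (τ - 1/2) ^ (k - 1)) τ := by
      exact (((hasDerivAt_id τ).sub_const (1/2)).pow k).congr_deriv (by simp)
    have h := hc.smul (hgd τ)
    simp [hF, hF', add_comm] at h ⊢; exact h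
  have hF'c : Continuous F' := by
    apply Continuous.add
    · exact (continuous_const.mul ((continuous_id.sub continuous_const).pow _)).smul hgc
    · exact ((continuous_id.sub continuous_const).pow _).smul (hgc.mul continuous_const)
  -- FTC
  have hftc : (∫ τ in (0:ℝ)..1, F' τ) = F 1 - F 0 :=
    intervalIntegral.integral_eq_sub_of_hasDerivAt (fun τ _ => hFd τ)
      (hF'c.intervalIntegrable 0 1)
  -- split the integral
  have hint1 : @IntervalIntegrable (Matrix (Fin n) (Fin n) ℂ) PseudoMetricSpace.toUniformSpace.toTopologicalSpace _ (fun τ : ℝ => ((k:ℝ) * (τ - 1/2) ^ (k - 1)) • g τ)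
      MeasureTheory.volume 0 1 :=
    ((continuous_const.mul ((continuous_id.sub continuous_const).pow _)).smul
      hgc).intervalIntegrable _ _
  have hint2 : @IntervalIntegrable (Matrix (Fin n) (Fin n) ℂ) PseudoMetricSpace.toUniformSpace.toTopologicalSpace _ (fun τ : ℝ => (τ - 1/2) ^ k • (g τ * (-A)))
      MeasureTheory.volume 0 1 :=
    (((continuous_id.sub continuous_const).pow _).smul
      (hgc.mul continuous_const)).intervalIntegrable _ _
  have hintf : @IntervalIntegrable (Matrix (Fin n) (Fin n) ℂ) PseudoMetricSpace.toUniformSpace.toTopologicalSpace _ (fun τ : ℝ => (τ - 1/2) ^ k • g τ)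
      MeasureTheory.volume 0 1 :=
    (((continuous_id.sub continuous_const).pow _).smul hgc).intervalIntegrable _ _
  have hsplit : (∫ τ in (0:ℝ)..1, F' τ) =
      (∫ τ in (0:ℝ)..1, ((k:ℝ) * (τ - 1/2) ^ (k - 1)) • g τ) +
      (∫ τ in (0:ℝ)..1, (τ - 1/2) ^ k • (g τ * (-A))) :=
    intervalIntegral.integral_add hint1 hint2
  -- pull out constants
  set I1 : Matrix (Fin n) (Fin n) ℂ := ∫ τ in (0:ℝ)..1, (τ - 1/2) ^ (k - 1) • g τ with hI1
  set J : Matrix (Fin n) (Fin n) ℂ := ∫ τ in (0:ℝ)..1, (τ - 1/2) ^ k • g τ with hJ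
  have hpull1 : (∫ τ in (0:ℝ)..1, ((k:ℝ) * (τ - 1/2) ^ (k - 1)) • g τ) = (k:ℝ) • I1 := by
    rw [hI1, ← intervalIntegral.integral_smul]
    congr 1; ext τ; rw [mul_smul]
  have hpull2 : (∫ τ in (0:ℝ)..1, (τ - 1/2) ^ k • (g τ * (-A))) = J * (-A) := by
    have h := ContinuousLinearMap.intervalIntegral_comp_comm
      ((ContinuousLinearMap.mul ℂ (Matrix (Fin n) (Fin n) ℂ)).flip (-A)) hintf
    simp only [ContinuousLinearMap.map_smul_of_tower, ContinuousLinearMap.flip_apply,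
      ContinuousLinearMap.mul_apply'] at h
    rw [hJ]; exact h
  -- endpoint values
  have hF1 : F 1 = ((1:ℝ)/2) ^ k • exp (-A) := by
    norm_num [hF, hg, one_div, inv_pow]
  have hF0 : F 0 = (-(1:ℝ)/2) ^ k • (1 : Matrix (Fin n) (Fin n) ℂ) := by
    simp [hF, hg]
    norm_num
  -- assemble: J * A = (k:ℝ) • I1 - F 1 + F 0
  have hJA : J * A = (k:ℝ) • I1 - F 1 + F 0 := by
    have h := hftc
    rw [hsplit, hpull1, hpull2, mul_neg] at h
    linear_combination (norm := module) -h
  -- commutation facts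
  have hAe : A * exp A = exp A * A := ((Commute.refl A).exp_right).eq
  have hAg : ∀ τ : ℝ, A * g τ = g τ * A := fun τ => by
    have : Commute A ((-(τ:ℂ)) • A) := ((Commute.refl A).smul_right _)
    exact (this.exp_right).eq
  have hAJ : A * J = J * A := by
    have h1 := ContinuousLinearMap.intervalIntegral_comp_comm
      (ContinuousLinearMap.mul ℂ (Matrix (Fin n) (Fin n) ℂ) A) hintf
    have h2 := ContinuousLinearMap.intervalIntegral_comp_comm
      ((ContinuousLinearMap.mul ℂ (Matrix (Fin n) (Fin n) ℂ)).flip A) hintf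
    simp only [ContinuousLinearMap.mul_apply'] at h1
    simp only [ContinuousLinearMap.flip_apply, ContinuousLinearMap.mul_apply'] at h2
    rw [hJ, ← h1, ← h2]
    congr 1; ext τ
    rw [mul_smul_comm, smul_mul_assoc, hAg τ]
  have hee : exp A * exp (-A) = 1 := by
    rw [← Matrix.exp_add_of_commute A (-A) (Commute.refl A).neg_right, add_neg_cancel, exp_zero]
  -- scalar bridges
  have hks : (k:ℂ) • (exp A * I1) = (k:ℝ) • (exp A * I1) := by
    rw [← Complex.coe_smul]; norm_num
  -- final computation
  calc A * (exp A * J) = exp A * (J * A) := by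
        rw [← mul_assoc, hAe, mul_assoc, hAJ]
    _ = exp A * ((k:ℝ) • I1 - ((1:ℝ)/2) ^ k • exp (-A)
          + (-(1:ℝ)/2) ^ k • (1 : Matrix (Fin n) (Fin n) ℂ)) := by
        rw [hJA, hF1, hF0]
    _ = (k:ℝ) • (exp A * I1) - ((1:ℝ)/2) ^ k • (1 : Matrix (Fin n) (Fin n) ℂ)
          + (-(1:ℝ)/2) ^ k • exp A := by
        rw [mul_add, mul_sub, mul_smul_comm, mul_smul_comm, mul_smul_comm, hee, mul_one]
    _ = (k : ℂ) • (exp A * I1) +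
        ((-1/2 : ℂ)) ^ k • (exp A - ((-1 : ℂ)) ^ k • (1 : Matrix (Fin n) (Fin n) ℂ)) := by
        rw [hks, smul_sub, smul_smul]
        have h1 : ((-1/2 : ℂ)) ^ k • exp A = (-(1:ℝ)/2) ^ k • exp A := by
          rw [← Complex.coe_smul]; norm_num
        have h2 : ((-1/2 : ℂ) ^ k * (-1:ℂ) ^ k) • (1 : Matrix (Fin n) (Fin n) ℂ)
            = ((1:ℝ)/2) ^ k • (1 : Matrix (Fin n) (Fin n) ℂ) := by
          rw [← mul_pow, ← Complex.coe_smul]; norm_num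
        rw [h1, h2]
        abel
end

section
/- For the (M-1,M) Padé approximant of the exponential with P(x) = ∑_{i=0}^{M-1} [(2M-1-i)!/(i!(M-1-i)!)] x^i and Q(x) = (M!/(M-1)!) ∑_{i=0}^{M} [(2M-1-i)!/(i!(M-i)!)] (-x)^i, the difference e^x Q(x) - P(x) is O(x^{2M}) as x → 0, i.e., the first 2M Taylor coefficients of e^x Q(x) - P(x) vanish. -/
open Finset Polynomial

lemma pade_prod_fact (a n : ℕ) : (∏ t ∈ Finset.range n, (a + t + 1)) * a.factorial = (a + n).factorial := by
  induction n with
  | zero => simp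
  | succ n ih =>
    rw [Finset.prod_range_succ, show a + (n+1) = (a+n) + 1 from by omega, Nat.factorial_succ, ← ih]
    ring

lemma pade_key (c : ℂ) : ∀ (k m : ℕ),
    ∑ j ∈ Finset.range (k+1), (-1:ℂ)^j * (k.choose j) * ∏ t ∈ Finset.range m, (c + (t+1) - j)
      = (m.descFactorial k) * ∏ t ∈ Finset.range (m-k), (c + (t+1)) := by
  intro k
  induction k with
  | zero => intro m; simp
  | succ k ih =>
    intro m
    match m with
    | 0 =>
      simp only [Finset.range_zero, Finset.prod_empty, mul_one, Nat.zero_descFactorial_succ]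
      have h0 := Int.alternating_sum_range_choose (n := k+1)
      rw [if_neg (Nat.succ_ne_zero k)] at h0
      have h1 : ((∑ i ∈ Finset.range (k + 2), (-1:ℤ) ^ i * ((k+1).choose i) : ℤ) : ℂ) = 0 := by
        rw [h0]; simp
      push_cast at h1
      rw [show k + 1 + 1 = k + 2 from rfl]
      simpa using h1
    | Nat.succ m' =>
      set h : ℕ → ℂ := fun j => ∏ t ∈ Finset.range (m'+1), (c + (t+1) - j) with hh
      have hdiff : ∀ i : ℕ, h i - h (i+1) = (m'+1) * ∏ t ∈ Finset.range m', (c + (t+1) - i) := by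
        intro i
        have h1 : h i = (∏ t ∈ Finset.range m', (c + (t+1) - i)) * (c + ((m':ℂ)+1) - i) := by
          simp only [hh]; rw [Finset.prod_range_succ]
        have h2 : h (i+1) = (∏ t ∈ Finset.range m', (c + (t+1) - i)) * (c - i) := by
          simp only [hh]
          rw [Finset.prod_range_succ']
          push_cast
          rw [show (c + (0+1) - ((i:ℂ)+1)) = c - i from by ring]
          congr 1
          apply Finset.prod_congr rfl; intro t _; push_cast; ring
        rw [h1, h2]; push_cast; ring
      have e2 : ∑ j ∈ Finset.range (k+2), (-1:ℂ)^j * (k.choose j) * h j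
          = ∑ i ∈ Finset.range (k+1), (-1:ℂ)^(i+1) * (k.choose (i+1)) * h (i+1) + (-1:ℂ)^0 * (k.choose 0) * h 0 :=
        Finset.sum_range_succ' _ _
      have e3 : ∑ j ∈ Finset.range (k+2), (-1:ℂ)^j * (k.choose j) * h j
          = ∑ j ∈ Finset.range (k+1), (-1:ℂ)^j * (k.choose j) * h j := by
        rw [Finset.sum_range_succ, Nat.choose_succ_self]; simp
      have e1 : ∑ j ∈ Finset.range (k+2), (-1:ℂ)^j * ((k+1).choose j) * h j
          = ∑ i ∈ Finset.range (k+1), (-1:ℂ)^(i+1) * ((k+1).choose (i+1)) * h (i+1) + (-1:ℂ)^0 * ((k+1).choose 0) * h 0 :=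
        Finset.sum_range_succ' _ _
      have e5 : ∑ i ∈ Finset.range (k+1), (-1:ℂ)^(i+1) * (k.choose (i+1)) * h (i+1) + (-1:ℂ)^0 * (k.choose 0) * h 0
          = ∑ j ∈ Finset.range (k+1), (-1:ℂ)^j * (k.choose j) * h j := by
        rw [← e2, e3]
      have e4 : ∑ j ∈ Finset.range (k+2), (-1:ℂ)^j * ((k+1).choose j) * h j
          = ∑ i ∈ Finset.range (k+1), (-1:ℂ)^i * (k.choose i) * (h i - h (i+1)) := by
        rw [e1]
        have hcc : ∀ i ∈ Finset.range (k+1), (-1:ℂ)^(i+1) * ((k+1).choose (i+1)) * h (i+1)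
            = -((-1:ℂ)^i * (k.choose i) * h (i+1)) + (-1:ℂ)^(i+1) * (k.choose (i+1)) * h (i+1) := by
          intro i _
          rw [Nat.choose_succ_succ]
          push_cast
          ring
        rw [Finset.sum_congr rfl hcc, Finset.sum_add_distrib, add_assoc,
          show ((-1:ℂ)^0 * (((k+1).choose 0 : ℕ) : ℂ) * h 0) = (-1:ℂ)^0 * ((k.choose 0 : ℕ) : ℂ) * h 0 from by simp,
          e5]
        have : ∀ i ∈ Finset.range (k+1), (-1:ℂ)^i * (k.choose i) * (h i - h (i+1))
            = (-1:ℂ)^i * (k.choose i) * h i + -((-1:ℂ)^i * (k.choose i) * h (i+1)) := by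
          intro i _; ring
        rw [Finset.sum_congr rfl this, Finset.sum_add_distrib]
        ring
      calc ∑ j ∈ Finset.range (k+1+1), (-1:ℂ)^j * ((k+1).choose j) * ∏ t ∈ Finset.range (m'+1), (c + (t+1) - j)
          = ∑ i ∈ Finset.range (k+1), (-1:ℂ)^i * (k.choose i) * (h i - h (i+1)) := e4
        _ = ∑ i ∈ Finset.range (k+1), ((m':ℂ)+1) * ((-1:ℂ)^i * (k.choose i) * ∏ t ∈ Finset.range m', (c + (t+1) - i)) := by
            apply Finset.sum_congr rfl; intro i _; rw [hdiff i]; ring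
        _ = ((m':ℂ)+1) * ∑ i ∈ Finset.range (k+1), (-1:ℂ)^i * (k.choose i) * ∏ t ∈ Finset.range m', (c + (t+1) - i) := by
            rw [← Finset.mul_sum]
        _ = ((m':ℂ)+1) * ((m'.descFactorial k) * ∏ t ∈ Finset.range (m'-k), (c + (t+1))) := by rw [ih m']
        _ = ((m'+1).descFactorial (k+1)) * ∏ t ∈ Finset.range (m'+1-(k+1)), (c + (t+1)) := by
            rw [Nat.succ_descFactorial_succ, Nat.succ_sub_succ]; push_cast; ring

noncomputable def padeE : Module.End ℂ (Polynomial ℂ) := 1 + Polynomial.derivative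

lemma padeE_apply (q : Polynomial ℂ) : padeE q = q + Polynomial.derivative q := by
  simp [padeE, LinearMap.add_apply]

lemma pade_rep (k : ℕ) : ∀ (p q : Polynomial ℂ),
    iteratedDeriv k (fun x : ℂ => Complex.exp x * Polynomial.eval x q - Polynomial.eval x p)
      = fun x => Complex.exp x * Polynomial.eval x ((padeE ^ k) q)
          - Polynomial.eval x (Polynomial.derivative^[k] p) := by
  induction k with
  | zero => intro p q; simp [iteratedDeriv_zero]
  | succ k ih =>
    intro p q
    rw [iteratedDeriv_succ']
    have hd : deriv (fun x : ℂ => Complex.exp x * Polynomial.eval x q - Polynomial.eval x p)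
        = fun x => Complex.exp x * Polynomial.eval x (q + Polynomial.derivative q)
            - Polynomial.eval x (Polynomial.derivative p) := by
      funext x
      rw [deriv_fun_sub (show DifferentiableAt ℂ (fun y => Complex.exp y * Polynomial.eval y q) x from (Complex.differentiable_exp x).mul (Polynomial.differentiable q x))
        (Polynomial.differentiable p x),
        deriv_fun_mul (Complex.differentiable_exp x) (Polynomial.differentiable q x),
        Complex.deriv_exp, Polynomial.deriv, Polynomial.deriv, Polynomial.eval_add]
      ring
    rw [hd, ih (Polynomial.derivative p) (q + Polynomial.derivative q)]
    rw [← padeE_apply, ← Module.End.mul_apply, ← pow_succ, ← Function.iterate_succ_apply]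

lemma pade_evalE (q : Polynomial ℂ) (k : ℕ) :
    Polynomial.eval 0 ((padeE ^ k) q)
      = ∑ j ∈ Finset.range (k+1), (k.choose j : ℂ) * (j.factorial : ℂ) * q.coeff j := by
  have hc : (padeE : Module.End ℂ (Polynomial ℂ)) ^ k
      = ∑ j ∈ Finset.range (k+1),
          (Polynomial.derivative : Module.End ℂ (Polynomial ℂ)) ^ j * 1 ^ (k-j) * (k.choose j : Module.End ℂ (Polynomial ℂ)) := by
    rw [padeE, add_comm]
    exact Commute.add_pow (Commute.one_right _) k
  rw [hc, LinearMap.sum_apply, Polynomial.eval_finset_sum]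
  apply Finset.sum_congr rfl
  intro j _
  rw [one_pow, mul_one, Module.End.mul_apply, Module.End.natCast_apply, map_nsmul,
    Module.End.pow_apply, Polynomial.eval_smul, ← Polynomial.coeff_zero_eq_eval_zero,
    Polynomial.coeff_iterate_derivative, zero_add, Nat.descFactorial_self]
  simp [mul_comm, mul_assoc]
open Finset

theorem stmt_9 (M : ℕ) (hM : 1 ≤ M)
    (P Q : ℂ → ℂ)
    (hP : ∀ x, P x = ∑ i ∈ Finset.range M,
      (((2 * M - 1 - i).factorial : ℂ) / ((i.factorial : ℂ) * ((M - 1 - i).factorial : ℂ))) * x ^ i)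
    (hQ : ∀ x, Q x = ((M.factorial : ℂ) / ((M - 1).factorial : ℂ)) *
      ∑ i ∈ Finset.range (M + 1),
        (((2 * M - 1 - i).factorial : ℂ) / ((i.factorial : ℂ) * ((M - i).factorial : ℂ))) * (-x) ^ i) :
    ∀ k : ℕ, k < 2 * M →
      iteratedDeriv k (fun x : ℂ => Complex.exp x * Q x - P x) 0 = 0 := by
  intro k hk
  set pc : ℕ → ℂ := fun i =>
    ((2 * M - 1 - i).factorial : ℂ) / ((i.factorial : ℂ) * ((M - 1 - i).factorial : ℂ)) with hpc
  set qc : ℕ → ℂ := fun i =>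
    ((M.factorial : ℂ) / ((M - 1).factorial : ℂ)) *
      (((2 * M - 1 - i).factorial : ℂ) / ((i.factorial : ℂ) * ((M - i).factorial : ℂ))) * (-1) ^ i
    with hqc
  set Pp : Polynomial ℂ := ∑ i ∈ Finset.range M, Polynomial.C (pc i) * Polynomial.X ^ i with hPp
  set Qp : Polynomial ℂ := ∑ i ∈ Finset.range (M+1), Polynomial.C (qc i) * Polynomial.X ^ i with hQp
  have hfun : (fun x : ℂ => Complex.exp x * Q x - P x)
      = fun x => Complex.exp x * Polynomial.eval x Qp - Polynomial.eval x Pp := by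
    funext x
    rw [hP, hQ]
    simp only [hPp, hQp, Polynomial.eval_finset_sum, Polynomial.eval_mul, Polynomial.eval_C,
      Polynomial.eval_pow, Polynomial.eval_X, hpc, hqc]
    rw [Finset.mul_sum]
    congr 2
    apply Finset.sum_congr rfl
    intro i _
    rw [neg_pow]
    ring
  rw [hfun, pade_rep k Pp Qp]
  simp only
  rw [Complex.exp_zero, one_mul, pade_evalE, ← Polynomial.coeff_zero_eq_eval_zero,
    Polynomial.coeff_iterate_derivative, zero_add, Nat.descFactorial_self]
  have hQc : ∀ j, Qp.coeff j = if j < M + 1 then qc j else 0 := by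
    intro j
    rw [hQp, Polynomial.finset_sum_coeff]
    simp only [Polynomial.coeff_C_mul, Polynomial.coeff_X_pow, mul_ite, mul_one, mul_zero]
    rw [Finset.sum_ite_eq (Finset.range (M+1)) j qc]
    simp [Finset.mem_range]
  have hPc : Pp.coeff k = if k < M then pc k else 0 := by
    rw [hPp, Polynomial.finset_sum_coeff]
    simp only [Polynomial.coeff_C_mul, Polynomial.coeff_X_pow, mul_ite, mul_one, mul_zero]
    rw [Finset.sum_ite_eq (Finset.range M) k pc]
    simp [Finset.mem_range]
  rw [hPc, sub_eq_zero]
  have hMfac : (M.factorial : ℂ) = (M : ℂ) * ((M-1).factorial : ℂ) := by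
    rw [show (M:ℂ) = ((M:ℕ):ℂ) from rfl, ← Nat.cast_mul, Nat.mul_factorial_pred (by omega : M ≠ 0)]
  have hfac0 : ∀ n : ℕ, ((n.factorial : ℂ)) ≠ 0 := fun n => Nat.cast_ne_zero.mpr n.factorial_ne_zero
  have hM0 : (M:ℂ) ≠ 0 := Nat.cast_ne_zero.mpr (by omega)
  have hterm : ∀ j ∈ Finset.range (k+1),
      (k.choose j : ℂ) * (j.factorial : ℂ) * Qp.coeff j
        = (M : ℂ) * ((-1:ℂ)^j * (k.choose j) * ∏ t ∈ Finset.range (M-1), ((M:ℂ) + (t+1) - j)) := by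
    intro j hj
    rw [Finset.mem_range] at hj
    rw [hQc j]
    by_cases hjM : j ≤ M
    · rw [if_pos (by omega)]
      have hprod : ∏ t ∈ Finset.range (M-1), ((M:ℂ) + (t+1) - j)
          = ((2*M-1-j).factorial : ℂ) / (((M-j).factorial : ℂ)) := by
        have hcast : ∏ t ∈ Finset.range (M-1), ((M:ℂ) + (t+1) - j)
            = ((∏ t ∈ Finset.range (M-1), ((M-j) + t + 1) : ℕ) : ℂ) := by
          rw [Nat.cast_prod]
          apply Finset.prod_congr rfl
          intro t _
          push_cast [Nat.cast_sub hjM]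
          ring
        rw [hcast, eq_div_iff (hfac0 _), ← Nat.cast_mul, pade_prod_fact (M-j) (M-1),
          show (M-j) + (M-1) = 2*M-1-j from by omega]
      rw [hprod, hqc]
      simp only
      rw [hMfac]
      field_simp [hfac0, hM0]
    · rw [if_neg (by omega)]
      have hmem : j - M - 1 ∈ Finset.range (M-1) := by
        rw [Finset.mem_range]; omega
      have hzero : ((M:ℂ) + ((j - M - 1 : ℕ) + 1) - j) = 0 := by
        rw [show j - M - 1 = j - (M+1) from by omega, Nat.cast_sub (show M+1 ≤ j from by omega)]
        push_cast
        ring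
      rw [Finset.prod_eq_zero hmem hzero]
      simp
  rw [Finset.sum_congr rfl hterm, ← Finset.mul_sum, pade_key (M:ℂ) k (M-1)]
  by_cases hkM : k < M
  · rw [if_pos hkM]
    have hprod2 : ∏ t ∈ Finset.range (M-1-k), ((M:ℂ) + (t+1))
        = ((2*M-1-k).factorial : ℂ) / (M.factorial : ℂ) := by
      have hcast : ∏ t ∈ Finset.range (M-1-k), ((M:ℂ) + (t+1))
          = ((∏ t ∈ Finset.range (M-1-k), (M + t + 1) : ℕ) : ℂ) := by
        rw [Nat.cast_prod]; apply Finset.prod_congr rfl; intro t _; push_cast; ring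
      rw [hcast, eq_div_iff (hfac0 _), ← Nat.cast_mul, pade_prod_fact M (M-1-k),
        show M + (M-1-k) = 2*M-1-k from by omega]
    have hdF : ((M-1).descFactorial k : ℂ) = ((M-1).factorial : ℂ) / ((M-1-k).factorial : ℂ) := by
      rw [eq_div_iff (hfac0 _), ← Nat.cast_mul, mul_comm ((M-1).descFactorial k),
        Nat.factorial_mul_descFactorial (show k ≤ M-1 from by omega)]
    rw [hprod2, hdF, hpc]
    simp only
    rw [hMfac]
    have h1 : ((M-1-k).factorial : ℂ) ≠ 0 := hfac0 _
    have h2 : ((M-1).factorial : ℂ) ≠ 0 := hfac0 _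
    have h3 : ((k.factorial : ℂ)) ≠ 0 := hfac0 _
    rw [nsmul_eq_mul]
    field_simp [hfac0, hM0]
  · rw [if_neg hkM, Nat.descFactorial_eq_zero_iff_lt.mpr (show M - 1 < k from by omega)]
    simp
end
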